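/- arXiv:2505.04010 — 5 statements merged into one kernel-verified Lean document; each statement's English description precedes it below -/
import Mathlib

section
/- Let p, q : ℝ → ℝ be continuous on [0,1], let B = !![0,1;-1,0] and Q(x) = !![p x, q x; q x, -(p x)]. Let Y : ℝ → ℝ² be differentiable on [0,1] with B · Y'(x) + Q(x) · Y(x) = 0 for all x ∈ [0,1] and Y(0) = (1,0). Define a(x) = (Y₁(x)-1)/2, b(x) = Y₂(x)/2, and Δ(x) = 4*b(x)² + (1 + 2*a(x))². Then Δ(x) > 0 for all x ∈ [0,1], and the potential is recovered by p(x) = (-2*b(x)*(2*a'(x)) - (1 + 2*a(x))*(2*b'(x)))/Δ(x) and q(x) = ((1 + 2*a(x))*(2*a'(x)) - 2*b(x)*(2*b'(x)))/Δ(x) for all x ∈ [0,1], where a' = Y₁'/2 and b' = Y₂'/2. -/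
open Matrix

theorem statement13 (p q : ℝ → ℝ)
    (hp : ContinuousOn p (Set.Icc 0 1)) (hq : ContinuousOn q (Set.Icc 0 1))
    (B : Matrix (Fin 2) (Fin 2) ℝ) (hB : B = !![0, 1; -1, 0])
    (Q : ℝ → Matrix (Fin 2) (Fin 2) ℝ) (hQ : ∀ x, Q x = !![p x, q x; q x, -(p x)])
    (Y Y' : ℝ → Fin 2 → ℝ)
    (hderiv : ∀ x ∈ Set.Icc (0 : ℝ) 1, ∀ i : Fin 2, HasDerivAt (fun t => Y t i) (Y' x i) x)
    (hode : ∀ x ∈ Set.Icc (0 : ℝ) 1, B.mulVec (Y' x) + (Q x).mulVec (Y x) = 0)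
    (hinit : Y 0 = ![1, 0])
    (a b a' b' Δ : ℝ → ℝ)
    (ha : ∀ x, a x = (Y x 0 - 1) / 2) (hb : ∀ x, b x = Y x 1 / 2)
    (ha' : ∀ x, a' x = Y' x 0 / 2) (hb' : ∀ x, b' x = Y' x 1 / 2)
    (hΔ : ∀ x, Δ x = 4 * (b x) ^ 2 + (1 + 2 * a x) ^ 2) :
    ∀ x ∈ Set.Icc (0 : ℝ) 1, Δ x > 0 ∧
      p x = (-2 * b x * (2 * a' x) - (1 + 2 * a x) * (2 * b' x)) / Δ x ∧
      q x = ((1 + 2 * a x) * (2 * a' x) - 2 * b x * (2 * b' x)) / Δ x := by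
  -- extract componentwise ODE
  have hode' : ∀ x ∈ Set.Icc (0 : ℝ) 1,
      Y' x 0 = q x * Y x 0 - p x * Y x 1 ∧ Y' x 1 = -(p x) * Y x 0 - q x * Y x 1 := by
    intro x hx
    have h := hode x hx
    have h0 := congrFun h 0
    have h1 := congrFun h 1
    simp [hB, hQ, Matrix.mulVec, dotProduct, Fin.sum_univ_two] at h0 h1
    constructor <;> linarith
  -- bound on coefficients
  obtain ⟨x₀, hx₀, hMx⟩ := isCompact_Icc.exists_isMaxOn (s := Set.Icc (0:ℝ) 1)
    (by norm_num : (Set.Icc (0:ℝ) 1).Nonempty)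
    (f := fun x => 2 * |p x| + 2 * |q x|)
    ((continuousOn_const.mul hp.abs).add (continuousOn_const.mul hq.abs))
  have hM : ∀ x ∈ Set.Icc (0:ℝ) 1, 2 * |p x| + 2 * |q x| ≤ 2 * |p x₀| + 2 * |q x₀| :=
    fun x hx => hMx hx
  set M : ℝ := 2 * |p x₀| + 2 * |q x₀| with hMdef
  set r : ℝ → ℝ := fun x => (Y x 0) ^ 2 + (Y x 1) ^ 2 with hrdef
  set h : ℝ → ℝ := fun x => r x * Real.exp (M * x) with hhdef
  have hr : ∀ x ∈ Set.Icc (0 : ℝ) 1,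
      HasDerivAt r (2 * Y x 0 * Y' x 0 + 2 * Y x 1 * Y' x 1) x := by
    intro x hx
    have h0 := ((hderiv x hx 0).pow 2)
    have h1 := ((hderiv x hx 1).pow 2)
    have := h0.add h1
    convert this using 1
    any_goals rfl
    ring
  have hh : ∀ x ∈ Set.Icc (0 : ℝ) 1,
      HasDerivAt h ((2 * Y x 0 * Y' x 0 + 2 * Y x 1 * Y' x 1 + M * r x) * Real.exp (M * x)) x := by
    intro x hx
    have he : HasDerivAt (fun t => Real.exp (M * t)) (Real.exp (M * x) * M) x := by
      have := ((hasDerivAt_id x).const_mul M).exp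
      simpa using this
    have := (hr x hx).mul he
    convert this using 1
    any_goals rfl
    ring
  have hderivnn : ∀ x ∈ Set.Icc (0 : ℝ) 1,
      0 ≤ (2 * Y x 0 * Y' x 0 + 2 * Y x 1 * Y' x 1 + M * r x) * Real.exp (M * x) := by
    intro x hx
    have hMx := hM x hx
    obtain ⟨e0, e1⟩ := hode' x hx
    have hep := Real.exp_pos (M * x)
    apply mul_nonneg _ hep.le
    rw [e0, e1]
    have hu := Y x 0
    have h1 : 0 ≤ (|q x| + q x) * (Y x 0) ^ 2 :=
      mul_nonneg (by linarith [neg_abs_le (q x)]) (sq_nonneg _)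
    have h2 : 0 ≤ (|q x| - q x) * (Y x 1) ^ 2 :=
      mul_nonneg (by linarith [le_abs_self (q x)]) (sq_nonneg _)
    have h3 : 0 ≤ (|p x| - p x) * (Y x 0 + Y x 1) ^ 2 :=
      mul_nonneg (by linarith [le_abs_self (p x)]) (sq_nonneg _)
    have h4 : 0 ≤ (|p x| + p x) * (Y x 0 - Y x 1) ^ 2 :=
      mul_nonneg (by linarith [neg_abs_le (p x)]) (sq_nonneg _)
    have h5 : 0 ≤ (M - (2 * |p x| + 2 * |q x|)) * ((Y x 0) ^ 2 + (Y x 1) ^ 2) :=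
      mul_nonneg (by linarith) (by positivity)
    simp only [hrdef]
    nlinarith [h1, h2, h3, h4, h5]
  have hmono : MonotoneOn h (Set.Icc (0 : ℝ) 1) := by
    apply monotoneOn_of_deriv_nonneg (convex_Icc 0 1)
    · exact fun x hx => ((hh x hx).continuousAt).continuousWithinAt
    · intro x hx
      rw [interior_Icc] at hx
      exact ((hh x (Set.mem_Icc_of_Ioo hx)).differentiableAt).differentiableWithinAt
    · intro x hx
      rw [interior_Icc] at hx
      rw [(hh x (Set.mem_Icc_of_Ioo hx)).deriv]
      exact hderivnn x (Set.mem_Icc_of_Ioo hx)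
  have h0val : h 0 = 1 := by simp [hhdef, hrdef, hinit]
  have hrpos : ∀ x ∈ Set.Icc (0 : ℝ) 1, 0 < r x := by
    intro x hx
    have h1 : h 0 ≤ h x := hmono (by norm_num) hx hx.1
    rw [h0val] at h1
    have hep := Real.exp_pos (M * x)
    by_contra hcon
    push_neg at hcon
    have : h x ≤ 0 := mul_nonpos_of_nonpos_of_nonneg hcon hep.le
    linarith
  intro x hx
  have hrx := hrpos x hx
  obtain ⟨e0, e1⟩ := hode' x hx
  have hΔr : Δ x = r x := by
    rw [hΔ, ha, hb, hrdef]; ring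
  have hΔpos : Δ x > 0 := by rw [hΔr]; exact hrx
  refine ⟨hΔpos, ?_, ?_⟩
  · rw [ha, hb, ha', hb', hΔr, e0, e1]
    simp only [hrdef]
    have hne : Y x 0 ^ 2 + Y x 1 ^ 2 ≠ 0 := hrx.ne'
    field_simp
    ring
  · rw [ha, hb, ha', hb', hΔr, e0, e1]
    simp only [hrdef]
    have hne : Y x 0 ^ 2 + Y x 1 ^ 2 ≠ 0 := hrx.ne'
    field_simp
    ring
end

section
/- Let p, q : ℝ → ℝ be continuous on [0,1], let B = !![0,1;-1,0] and Q(x) = !![p x, q x; q x, -(p x)]. Let Y : ℝ → ℝ² be differentiable on [0,1] with B · Y'(x) + Q(x) · Y(x) = 0 for all x ∈ [0,1] and Y(0) = (0,1). Define c(x) = Y₁(x)/2, d(x) = (Y₂(x)-1)/2, and Δ(x) = (1 + 2*d(x))² + 4*c(x)². Then Δ(x) > 0 for all x ∈ [0,1], and p(x) = (-(1 + 2*d(x))*(2*c'(x)) - 2*c(x)*(2*d'(x)))/Δ(x) and q(x) = (2*c(x)*(2*c'(x)) - (1 + 2*d(x))*(2*d'(x)))/Δ(x) for all x ∈ [0,1],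 where c' = Y₁'/2 and d' = Y₂'/2. -/
open Matrix

theorem statement14 (p q : ℝ → ℝ)
    (hp : ContinuousOn p (Set.Icc 0 1)) (hq : ContinuousOn q (Set.Icc 0 1))
    (B : Matrix (Fin 2) (Fin 2) ℝ) (hB : B = !![0, 1; -1, 0])
    (Q : ℝ → Matrix (Fin 2) (Fin 2) ℝ) (hQ : ∀ x, Q x = !![p x, q x; q x, -(p x)])
    (Y Y' : ℝ → Fin 2 → ℝ)
    (hderiv : ∀ x ∈ Set.Icc (0 : ℝ) 1, ∀ i : Fin 2, HasDerivAt (fun t => Y t i) (Y' x i) x)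
    (hode : ∀ x ∈ Set.Icc (0 : ℝ) 1, B.mulVec (Y' x) + (Q x).mulVec (Y x) = 0)
    (hinit : Y 0 = ![0, 1])
    (c d c' d' Δ : ℝ → ℝ)
    (hc : ∀ x, c x = Y x 0 / 2) (hd : ∀ x, d x = (Y x 1 - 1) / 2)
    (hc' : ∀ x, c' x = Y' x 0 / 2) (hd' : ∀ x, d' x = Y' x 1 / 2)
    (hΔ : ∀ x, Δ x = (1 + 2 * d x) ^ 2 + 4 * (c x) ^ 2) :
    ∀ x ∈ Set.Icc (0 : ℝ) 1, Δ x > 0 ∧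
      p x = (-(1 + 2 * d x) * (2 * c' x) - 2 * c x * (2 * d' x)) / Δ x ∧
      q x = (2 * c x * (2 * c' x) - (1 + 2 * d x) * (2 * d' x)) / Δ x := by
  -- component equations of the ODE
  have key : ∀ z ∈ Set.Icc (0:ℝ) 1,
      Y' z 0 = q z * Y z 0 - p z * Y z 1 ∧ Y' z 1 = -(p z * Y z 0) - q z * Y z 1 := by
    intro z hz
    have h := hode z hz
    rw [hB, hQ] at h
    have h0 := congrFun h 0
    have h1 := congrFun h 1
    simp [Matrix.mulVec, dotProduct, Fin.sum_univ_two, Matrix.vecHead, Matrix.vecTail] at h0 h1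
    constructor <;> linarith
  -- bounds for p, q on [0,1]
  obtain ⟨Cp, hCp⟩ := (isCompact_Icc).exists_bound_of_continuousOn hp
  obtain ⟨Cq, hCq⟩ := (isCompact_Icc).exists_bound_of_continuousOn hq
  set Mp : ℝ := max Cp 0 with hMp
  set Mq : ℝ := max Cq 0 with hMq
  have hMp0 : 0 ≤ Mp := le_max_right _ _
  have hMq0 : 0 ≤ Mq := le_max_right _ _
  have hpb : ∀ z ∈ Set.Icc (0:ℝ) 1, |p z| ≤ Mp := fun z hz =>
    le_trans (by simpa using hCp z hz) (le_max_left _ _)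
  have hqb : ∀ z ∈ Set.Icc (0:ℝ) 1, |q z| ≤ Mq := fun z hz =>
    le_trans (by simpa using hCq z hz) (le_max_left _ _)
  -- the (time-clamped) vector field
  set π : ℝ → ℝ := fun t => min (max t 0) 1 with hπ
  have hπmem : ∀ t, π t ∈ Set.Icc (0:ℝ) 1 := fun t =>
    ⟨le_min (le_max_right _ _) zero_le_one, min_le_right _ _⟩
  have hπid : ∀ t ∈ Set.Icc (0:ℝ) 1, π t = t := fun t ht => by
    simp [hπ, max_eq_left ht.1, min_eq_left ht.2]
  set v : ℝ → (Fin 2 → ℝ) → (Fin 2 → ℝ) :=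
    fun t y => ![q (π t) * y 0 - p (π t) * y 1, -(p (π t) * y 0) - q (π t) * y 1] with hv
  set K : NNReal := ⟨Mp + Mq, by positivity⟩ with hK
  have hKcoe : (K : ℝ) = Mp + Mq := rfl
  have hlip : ∀ t, LipschitzWith K (v t) := by
    intro t
    apply LipschitzWith.of_dist_le_mul
    intro y z
    have hpπ := hpb _ (hπmem t)
    have hqπ := hqb _ (hπmem t)
    have hd0 : dist (y 0) (z 0) ≤ dist y z := dist_le_pi_dist y z 0
    have hd1 : dist (y 1) (z 1) ≤ dist y z := dist_le_pi_dist y z 1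
    rw [Real.dist_eq] at hd0 hd1
    have hdnn : (0:ℝ) ≤ dist y z := dist_nonneg
    rw [hKcoe]
    apply (dist_pi_le_iff (by positivity)).2
    intro i
    set a := p (π t) with ha
    set b := q (π t) with hb
    fin_cases i
    · show |b * y 0 - a * y 1 - (b * z 0 - a * z 1)| ≤ (Mp + Mq) * dist y z
      have he : b * y 0 - a * y 1 - (b * z 0 - a * z 1) = b * (y 0 - z 0) - a * (y 1 - z 1) := by
        ring
      rw [he]
      calc |b * (y 0 - z 0) - a * (y 1 - z 1)|
          ≤ |b * (y 0 - z 0)| + |a * (y 1 - z 1)| := abs_sub _ _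
        _ = |b| * |y 0 - z 0| + |a| * |y 1 - z 1| := by rw [abs_mul, abs_mul]
        _ ≤ (Mp + Mq) * dist y z := by
            nlinarith [mul_le_mul hqπ hd0 (abs_nonneg _) hMq0,
              mul_le_mul hpπ hd1 (abs_nonneg _) hMp0]
    · show |-(a * y 0) - b * y 1 - (-(a * z 0) - b * z 1)| ≤ (Mp + Mq) * dist y z
      have he : -(a * y 0) - b * y 1 - (-(a * z 0) - b * z 1)
          = -(a * (y 0 - z 0)) - b * (y 1 - z 1) := by ring
      rw [he]
      calc |-(a * (y 0 - z 0)) - b * (y 1 - z 1)|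
          ≤ |-(a * (y 0 - z 0))| + |b * (y 1 - z 1)| := abs_sub _ _
        _ = |a| * |y 0 - z 0| + |b| * |y 1 - z 1| := by rw [abs_neg, abs_mul, abs_mul]
        _ ≤ (Mp + Mq) * dist y z := by
            nlinarith [mul_le_mul hpπ hd0 (abs_nonneg _) hMp0,
              mul_le_mul hqπ hd1 (abs_nonneg _) hMq0]
  -- Y never vanishes on [0,1]
  have hnonzero : ∀ x ∈ Set.Icc (0:ℝ) 1, ¬ (Y x 0 = 0 ∧ Y x 1 = 0) := by
    rintro x hx ⟨h0, h1⟩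
    have hY0 : Y x = 0 := by
      funext i; fin_cases i <;> simpa
    have hx0 : x ≠ 0 := by
      rintro rfl
      rw [hinit] at h1
      simp at h1
    have hxpos : 0 < x := lt_of_le_of_ne hx.1 (Ne.symm hx0)
    have hsub : Set.Icc (0:ℝ) x ⊆ Set.Icc (0:ℝ) 1 := Set.Icc_subset_Icc le_rfl hx.2
    -- Y solves y' = v t y on [0,x]
    have hYd : ∀ t ∈ Set.Ioc (0:ℝ) x, HasDerivWithinAt Y (v t (Y t)) (Set.Iic t) t := by
      intro t ht
      have htmem : t ∈ Set.Icc (0:ℝ) 1 := hsub ⟨le_of_lt ht.1, ht.2⟩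
      have hDA : HasDerivAt Y (Y' t) t := hasDerivAt_pi.2 (hderiv t htmem)
      have : v t (Y t) = Y' t := by
        obtain ⟨e0, e1⟩ := key t htmem
        funext i; fin_cases i <;> simp [hv, hπid t htmem, e0, e1]
      rw [this]
      exact hDA.hasDerivWithinAt
    have hYc : ContinuousOn Y (Set.Icc 0 x) := by
      intro t ht
      exact (continuousAt_pi.2 fun i => (hderiv t (hsub ht) i).continuousAt).continuousWithinAt
    have hgd : ∀ t ∈ Set.Ioc (0:ℝ) x,
        HasDerivWithinAt (fun _ : ℝ => (0 : Fin 2 → ℝ)) (v t 0) (Set.Iic t) t := by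
      intro t _
      have : v t 0 = 0 := by funext i; fin_cases i <;> simp [hv]
      rw [this]
      exact hasDerivWithinAt_const _ _ _
    have heq := ODE_solution_unique_of_mem_Icc_left (s := fun _ => Set.univ)
      (fun t _ => (hlip t).lipschitzOnWith)
      hYc hYd (fun _ _ => trivial)
      (continuousOn_const) hgd (fun _ _ => trivial)
      (by rw [hY0])
    have h00 := heq (Set.left_mem_Icc.2 (le_of_lt hxpos))
    have h01 := congrFun h00 1
    rw [hinit] at h01
    simp at h01
  -- main conclusion
  intro x hx
  have hΔeq : Δ x = (Y x 1) ^ 2 + (Y x 0) ^ 2 := by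
    rw [hΔ, hc, hd]; ring
  have hΔpos : Δ x > 0 := by
    rcases (not_and_or.1 (hnonzero x hx)) with h | h
    · rw [hΔeq]; positivity
    · rw [hΔeq]; positivity
  obtain ⟨e0, e1⟩ := key x hx
  refine ⟨hΔpos, ?_, ?_⟩ <;>
  · rw [eq_div_iff hΔpos.ne', hΔ, hc, hd, hc', hd', e0, e1]; ring
end

section
/- Let α ∈ ℝ, let p, q : ℝ → ℝ be continuous on [0,1], let B = !![0,1;-1,0] and Q(x) = !![p x, q x; q x, -(p x)]. Let Y : ℝ → ℝ² be differentiable on [0,1] with B · Y'(x) + Q(x) · Y(x) = 0 for all x ∈ [0,1] and Y(0) = (sin α, -cos α). Define c_α(x) = (sin α - Y₁(x))/2, d_α(x) = -(cos α + Y₂(x))/2, and Δ(x) = (cos α + 2*d_α(x))² + (sin α - 2*c_α(x))². Then Δ(x) > 0 for all x ∈ [0,1], and p(x) = (-(cos α + 2*d_α(x))*(2*c_α'(x)) + (sin α - 2*c_α(x))*(2*d_α'(x)))/Δ(x) and q(x) = ((-sin α + 2*c_α(x))*(2*c_α'(x)) - (cos α + 2*d_α(x))*(2*d_α'(x)))/Δ(x)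 for all x ∈ [0,1]. -/
open Matrix Real

theorem statement15 (α : ℝ) (p q : ℝ → ℝ)
    (hp : ContinuousOn p (Set.Icc 0 1)) (hq : ContinuousOn q (Set.Icc 0 1))
    (B : Matrix (Fin 2) (Fin 2) ℝ) (hB : B = !![0, 1; -1, 0])
    (Q : ℝ → Matrix (Fin 2) (Fin 2) ℝ) (hQ : ∀ x, Q x = !![p x, q x; q x, -(p x)])
    (Y Y' : ℝ → Fin 2 → ℝ)
    (hderiv : ∀ x ∈ Set.Icc (0 : ℝ) 1, ∀ i : Fin 2, HasDerivAt (fun t => Y t i) (Y' x i) x)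
    (hode : ∀ x ∈ Set.Icc (0 : ℝ) 1, B.mulVec (Y' x) + (Q x).mulVec (Y x) = 0)
    (hinit : Y 0 = ![Real.sin α, -Real.cos α])
    (cα dα cα' dα' Δ : ℝ → ℝ)
    (hc : ∀ x, cα x = (Real.sin α - Y x 0) / 2) (hd : ∀ x, dα x = -(Real.cos α + Y x 1) / 2)
    (hc' : ∀ x, cα' x = -(Y' x 0) / 2) (hd' : ∀ x, dα' x = -(Y' x 1) / 2)
    (hΔ : ∀ x, Δ x = (Real.cos α + 2 * dα x) ^ 2 + (Real.sin α - 2 * cα x) ^ 2) :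
    ∀ x ∈ Set.Icc (0 : ℝ) 1, Δ x > 0 ∧
      p x = (-(Real.cos α + 2 * dα x) * (2 * cα' x) + (Real.sin α - 2 * cα x) * (2 * dα' x)) / Δ x ∧
      q x = ((-Real.sin α + 2 * cα x) * (2 * cα' x) - (Real.cos α + 2 * dα x) * (2 * dα' x)) / Δ x := by
  -- Componentwise ODE
  have hY'0 : ∀ x ∈ Set.Icc (0 : ℝ) 1, Y' x 0 = q x * Y x 0 - p x * Y x 1 := by
    intro x hx
    have h := congrFun (hode x hx) 1
    simp [hB, hQ, Matrix.mulVec, dotProduct, Fin.sum_univ_two] at h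
    linarith
  have hY'1 : ∀ x ∈ Set.Icc (0 : ℝ) 1, Y' x 1 = -(p x * Y x 0) - q x * Y x 1 := by
    intro x hx
    have h := congrFun (hode x hx) 0
    simp [hB, hQ, Matrix.mulVec, dotProduct, Fin.sum_univ_two] at h
    linarith
  -- Bounds on p and q
  obtain ⟨Cp, hCp⟩ := isCompact_Icc.exists_bound_of_continuousOn hp
  obtain ⟨Cq, hCq⟩ := isCompact_Icc.exists_bound_of_continuousOn hq
  set K : ℝ := |Cp| + |Cq| with hK
  have hKnn : 0 ≤ K := by positivity
  have hpb : ∀ x ∈ Set.Icc (0 : ℝ) 1, |p x| ≤ K := fun x hx =>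
    le_trans (hCp x hx) (le_trans (le_abs_self Cp) (le_add_of_nonneg_right (abs_nonneg Cq)))
  have hqb : ∀ x ∈ Set.Icc (0 : ℝ) 1, |q x| ≤ K := fun x hx =>
    le_trans (hCq x hx) (le_trans (le_abs_self Cq) (le_add_of_nonneg_left (abs_nonneg Cp)))
  -- Δ in terms of Y
  have hΔY : ∀ x, Δ x = (Y x 0) ^ 2 + (Y x 1) ^ 2 := by
    intro x
    rw [hΔ, hc, hd]; ring
  intro x₀ hx₀
  obtain ⟨hx₀0, hx₀1⟩ := hx₀
  -- Δ x₀ > 0 : otherwise Y x₀ = 0 and by (backward) Gronwall Y 0 = 0, contradiction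
  have hΔpos : Δ x₀ > 0 := by
    rcases lt_or_ge 0 (Δ x₀) with h | h
    · exact h
    exfalso
    have hY0 : Y x₀ 0 = 0 ∧ Y x₀ 1 = 0 := by
      constructor <;> nlinarith [hΔY x₀, sq_nonneg (Y x₀ 0), sq_nonneg (Y x₀ 1)]
    -- Reverse time: Z t = Y (x₀ - t)
    set Z : ℝ → Fin 2 → ℝ := fun t => Y (x₀ - t) with hZ
    set Z' : ℝ → Fin 2 → ℝ := fun t i => -(Y' (x₀ - t) i) with hZ'
    have hmem : ∀ t ∈ Set.Icc (0 : ℝ) x₀, x₀ - t ∈ Set.Icc (0 : ℝ) 1 := by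
      intro t ht
      exact ⟨by linarith [ht.2], by linarith [ht.1]⟩
    have hZd : ∀ t ∈ Set.Icc (0 : ℝ) x₀, HasDerivAt Z (Z' t) t := by
      intro t ht
      rw [hasDerivAt_pi]
      intro i
      have h1 : HasDerivAt (fun s : ℝ => x₀ - s) (-1) t := by
        simpa using (hasDerivAt_id t).const_sub x₀
      have h2 := (hderiv (x₀ - t) (hmem t ht) i).comp t h1
      simp only [mul_neg, mul_one] at h2
      exact h2
    have hZcont : ContinuousOn Z (Set.Icc 0 x₀) := fun t ht =>
      ((hZd t ht).continuousAt).continuousWithinAt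
    have hbound : ∀ t ∈ Set.Ico (0 : ℝ) x₀, ‖Z' t‖ ≤ (2 * K) * ‖Z t‖ + 0 := by
      intro t ht
      have htI : t ∈ Set.Icc (0 : ℝ) x₀ := ⟨ht.1, le_of_lt ht.2⟩
      have hxm := hmem t htI
      rw [add_zero]
      have hnn : 0 ≤ (2 * K) * ‖Z t‖ := by positivity
      have h0 : |Y (x₀ - t) 0| ≤ ‖Z t‖ := norm_le_pi_norm (Z t) 0
      have h1 : |Y (x₀ - t) 1| ≤ ‖Z t‖ := norm_le_pi_norm (Z t) 1
      have hp' := hpb _ hxm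
      have hq' := hqb _ hxm
      have m1 : |q (x₀ - t)| * |Y (x₀ - t) 0| ≤ K * ‖Z t‖ :=
        mul_le_mul hq' h0 (abs_nonneg _) hKnn
      have m2 : |p (x₀ - t)| * |Y (x₀ - t) 1| ≤ K * ‖Z t‖ :=
        mul_le_mul hp' h1 (abs_nonneg _) hKnn
      have m3 : |p (x₀ - t)| * |Y (x₀ - t) 0| ≤ K * ‖Z t‖ :=
        mul_le_mul hp' h0 (abs_nonneg _) hKnn
      have m4 : |q (x₀ - t)| * |Y (x₀ - t) 1| ≤ K * ‖Z t‖ :=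
        mul_le_mul hq' h1 (abs_nonneg _) hKnn
      have b0 : |Z' t 0| ≤ 2 * K * ‖Z t‖ := by
        have e0 : Z' t 0 = -(q (x₀ - t) * Y (x₀ - t) 0 - p (x₀ - t) * Y (x₀ - t) 1) := by
          simp only [hZ']; rw [hY'0 _ hxm]
        rw [e0, abs_neg]
        calc |q (x₀ - t) * Y (x₀ - t) 0 - p (x₀ - t) * Y (x₀ - t) 1|
            ≤ |q (x₀ - t) * Y (x₀ - t) 0| + |p (x₀ - t) * Y (x₀ - t) 1| := abs_sub _ _
          _ = |q (x₀ - t)| * |Y (x₀ - t) 0| + |p (x₀ - t)| * |Y (x₀ - t) 1| := by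
              rw [abs_mul, abs_mul]
          _ ≤ 2 * K * ‖Z t‖ := by linarith
      have b1 : |Z' t 1| ≤ 2 * K * ‖Z t‖ := by
        have e1 : Z' t 1 = -(-(p (x₀ - t) * Y (x₀ - t) 0) - q (x₀ - t) * Y (x₀ - t) 1) := by
          simp only [hZ']; rw [hY'1 _ hxm]
        rw [e1, abs_neg]
        calc |(-(p (x₀ - t) * Y (x₀ - t) 0)) - q (x₀ - t) * Y (x₀ - t) 1|
            ≤ |(-(p (x₀ - t) * Y (x₀ - t) 0))| + |q (x₀ - t) * Y (x₀ - t) 1| := abs_sub _ _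
          _ = |p (x₀ - t)| * |Y (x₀ - t) 0| + |q (x₀ - t)| * |Y (x₀ - t) 1| := by
              rw [abs_neg, abs_mul, abs_mul]
          _ ≤ 2 * K * ‖Z t‖ := by linarith
      rw [pi_norm_le_iff_of_nonneg hnn]
      intro i
      fin_cases i
      · exact b0
      · exact b1
    have hZ0 : ‖Z 0‖ ≤ 0 := by
      have : Z 0 = 0 := by
        funext i
        fin_cases i <;> simp [hZ, hY0.1, hY0.2]
      simp [this]
    have := norm_le_gronwallBound_of_norm_deriv_right_le hZcont
      (fun t ht => (hZd t ⟨ht.1, le_of_lt ht.2⟩).hasDerivWithinAt) hZ0 hbound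
      x₀ ⟨hx₀0, le_refl x₀⟩
    rw [gronwallBound_ε0_δ0] at this
    have hZx0 : Z x₀ = 0 := norm_le_zero_iff.mp this
    have hY00 : Y 0 = 0 := by simpa [hZ] using hZx0
    have h0 := congrFun hY00 0
    have h1 := congrFun hY00 1
    rw [hinit] at h0 h1
    simp at h0 h1
    nlinarith [Real.sin_sq_add_cos_sq α]
  refine ⟨hΔpos, ?_, ?_⟩
  · rw [eq_div_iff (ne_of_gt hΔpos)]
    rw [hc, hd, hc', hd', hΔY, hY'0 x₀ ⟨hx₀0, hx₀1⟩, hY'1 x₀ ⟨hx₀0, hx₀1⟩]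
    ring
  · rw [eq_div_iff (ne_of_gt hΔpos)]
    rw [hc, hd, hc', hd', hΔY, hY'0 x₀ ⟨hx₀0, hx₀1⟩, hY'1 x₀ ⟨hx₀0, hx₀1⟩]
    ring
end

section
/- For n ∈ ℕ let P_n denote the n-th Legendre polynomial, P_n(y) = (1/(2ⁿ n!)) · (dⁿ/dyⁿ)(y² - 1)ⁿ. Fix x > 0 and for k ∈ ℕ define p_k : [0,x] → ℝ by p_k(t) = (√(2k+1)/√x) · P_k(t/x), and the diagonal matrix-valued function Â_k(t) = !![p_{2k}(t), 0; 0, p_{2k+1}(t)]. Then the family {Â_k}_{k≥0} is orthonormal with respect to the matrix-valued inner product on [0,x]: for all k, j ∈ ℕ, ∫_0^x Â_k(t) * (Â_j(t))ᵀ dt = δ_{kj} • 1, where 1 is the 2×2 identity matrix and δ_{kj} is the Kronecker delta. -/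
open Matrix Polynomial intervalIntegral
open scoped Matrix.Norms.L2Operator

/-- The `n`-th Legendre polynomial, via the Rodrigues formula
`P_n(y) = (1/(2ⁿ n!)) · (dⁿ/dyⁿ)(y² - 1)ⁿ`. -/
noncomputable def legendreP (n : ℕ) : Polynomial ℝ :=
  (1 / (2 ^ n * n.factorial) : ℝ) • (Polynomial.derivative^[n] ((Polynomial.X ^ 2 - 1) ^ n))

namespace LegendreAux

open MeasureTheory Set

noncomputable def f (n : ℕ) : Polynomial ℝ := (X ^ 2 - 1) ^ n

lemma intInt (q : Polynomial ℝ) (a b : ℝ) :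
    IntervalIntegrable (fun t => eval t q) volume a b :=
  (q.continuous).intervalIntegrable a b

lemma natDegree_f (n : ℕ) : (f n).natDegree = 2 * n := by
  have h : (X ^ 2 - 1 : Polynomial ℝ).natDegree = 2 := by
    simpa using (natDegree_X_pow_sub_C (R := ℝ) (n := 2) (r := 1))
  rw [f, natDegree_pow, h, mul_comm]

lemma monic_f (n : ℕ) : (f n).Monic := by
  have : (X ^ 2 - 1 : Polynomial ℝ).Monic := by
    simpa using monic_X_pow_sub_C (1 : ℝ) (n := 2) (by norm_num)
  exact this.pow n

lemma exists_factor (n : ℕ) : ∀ k, k ≤ n →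
    ∃ q : Polynomial ℝ, derivative^[k] (f n) = (X ^ 2 - 1) ^ (n - k) * q := by
  intro k
  induction k with
  | zero => intro _; exact ⟨1, by simp [f]⟩
  | succ k ih =>
    intro hk
    obtain ⟨q, hq⟩ := ih (by omega)
    refine ⟨(C ((n - k : ℕ) : ℝ)) * derivative (X ^ 2 - 1) * q
      + (X ^ 2 - 1) * derivative q, ?_⟩
    rw [Function.iterate_succ_apply', hq, derivative_mul, derivative_pow]
    have h1 : (X ^ 2 - 1 : Polynomial ℝ) ^ (n - k) = (X ^ 2 - 1) ^ (n - (k + 1)) * (X ^ 2 - 1) := by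
      rw [← pow_succ]; congr 1; omega
    have h2 : n - k - 1 = n - (k + 1) := by omega
    rw [h2, h1]; ring

lemma eval_iter_f_zero {n k : ℕ} (hk : k < n) {y : ℝ} (hy : y ^ 2 = 1) :
    eval y (derivative^[k] (f n)) = 0 := by
  obtain ⟨q, hq⟩ := exists_factor n k hk.le
  have hnk : n - k ≠ 0 := by omega
  rw [hq]
  simp [eval_pow, hy, zero_pow hnk]

/-- single integration by parts with vanishing boundary. -/
lemma ibp (q g : Polynomial ℝ) (h1 : eval (1:ℝ) q = 0) (h2 : eval (-1:ℝ) q = 0) :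
    ∫ t in (-1:ℝ)..1, eval t (derivative q) * eval t g
      = - ∫ t in (-1:ℝ)..1, eval t q * eval t (derivative g) := by
  have H := integral_deriv_mul_eq_sub (a := (-1:ℝ)) (b := 1)
    (u := fun t => eval t q) (v := fun t => eval t g)
    (u' := fun t => eval t (derivative q)) (v' := fun t => eval t (derivative g))
    (fun t _ => q.hasDerivAt t) (fun t _ => g.hasDerivAt t)
    (intInt _ _ _) (intInt _ _ _)
  have H' : ∫ t in (-1:ℝ)..1,
      (eval t (derivative q) * eval t g + eval t q * eval t (derivative g))
      = eval (1:ℝ) q * eval (1:ℝ) g - eval (-1:ℝ) q * eval (-1:ℝ) g := H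
  clear H; rename' H' => H
  rw [h1, h2, zero_mul, zero_mul, sub_zero,
    integral_add ((intInt (derivative q) (-1) 1).mul_continuousOn g.continuous.continuousOn)
      ((intInt q (-1) 1).mul_continuousOn (derivative g).continuous.continuousOn)] at H
  linarith

lemma ibp_iter (P : Polynomial ℝ) (n : ℕ)
    (hP : ∀ i, i < n → eval (1:ℝ) (derivative^[i] P) = 0 ∧ eval (-1:ℝ) (derivative^[i] P) = 0) :
    ∀ g : Polynomial ℝ, ∫ t in (-1:ℝ)..1, eval t (derivative^[n] P) * eval t g
      = (-1:ℝ) ^ n * ∫ t in (-1:ℝ)..1, eval t P * eval t (derivative^[n] g) := by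
  induction n with
  | zero => intro g; simp
  | succ n ih =>
    intro g
    have hP' : ∀ i, i < n → eval (1:ℝ) (derivative^[i] P) = 0 ∧ eval (-1:ℝ) (derivative^[i] P) = 0 :=
      fun i hi => hP i (by omega)
    rw [Function.iterate_succ_apply',
      ibp _ g (hP n (by omega)).1 (hP n (by omega)).2,
      ih hP' (derivative g), ← Function.iterate_succ_apply]
    ring

lemma core_eq (n m : ℕ) :
    ∫ t in (-1:ℝ)..1, eval t (derivative^[n] (f n)) * eval t (derivative^[m] (f m))
      = (-1:ℝ) ^ n * ∫ t in (-1:ℝ)..1, eval t (f n) * eval t (derivative^[n + m] (f m)) := by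
  have h := ibp_iter (f n) n
    (fun i hi => ⟨eval_iter_f_zero hi (by norm_num), eval_iter_f_zero hi (by norm_num)⟩)
    (derivative^[m] (f m))
  rw [h, Function.iterate_add_apply]

lemma core_zero {n m : ℕ} (h : m < n) :
    ∫ t in (-1:ℝ)..1, eval t (derivative^[n] (f n)) * eval t (derivative^[m] (f m)) = 0 := by
  rw [core_eq]
  have hz : derivative^[n + m] (f m) = 0 :=
    iterate_derivative_eq_zero (by rw [natDegree_f]; omega)
  simp [hz]

lemma top_deriv (n : ℕ) : derivative^[2 * n] (f n) = C ((2 * n).factorial : ℝ) := by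
  have hdeg : (derivative^[2 * n] (f n)).natDegree ≤ 0 := by
    have := natDegree_iterate_derivative (f n) (2 * n)
    rw [natDegree_f] at this; omega
  rw [eq_C_of_natDegree_le_zero hdeg]
  congr 1
  rw [coeff_iterate_derivative, zero_add, Nat.descFactorial_self]
  have : (f n).coeff (2 * n) = 1 := by
    have := (monic_f n).leadingCoeff
    rwa [Polynomial.leadingCoeff, natDegree_f] at this
  rw [this]; simp

/-! ### Wallis-type integral -/

noncomputable def W (n : ℕ) : ℝ := ∫ t in (-1:ℝ)..1, (1 - t ^ 2) ^ n

lemma contW (n : ℕ) : Continuous (fun t : ℝ => (1 - t ^ 2) ^ n) := by fun_prop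

lemma W_succ (n : ℕ) : (2 * (n:ℝ) + 3) * W (n + 1) = (2 * (n:ℝ) + 2) * W n := by
  have hv : ∀ t : ℝ, HasDerivAt (fun t : ℝ => (1 - t ^ 2) ^ (n + 1))
      (((n:ℝ) + 1) * (1 - t ^ 2) ^ n * (-(2 * t ^ 1))) t := by
    intro t
    have h1 : HasDerivAt (fun t : ℝ => 1 - t ^ 2) (-(2 * t ^ 1)) t :=
      (hasDerivAt_pow 2 t).const_sub 1
    have := h1.fun_pow (n + 1)
    simpa using this
  have H := integral_deriv_mul_eq_sub (a := (-1:ℝ)) (b := 1)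
    (u := fun t => t) (v := fun t : ℝ => (1 - t ^ 2) ^ (n + 1))
    (u' := fun _ => (1:ℝ))
    (v' := fun t => ((n:ℝ) + 1) * (1 - t ^ 2) ^ n * (-(2 * t ^ 1)))
    (fun t _ => hasDerivAt_id t) (fun t _ => hv t)
    ((continuous_const).intervalIntegrable _ _)
    (by apply Continuous.intervalIntegrable; fun_prop)
  have h0 : (1 : ℝ) * (1 - (1:ℝ) ^ 2) ^ (n + 1) - (-1) * (1 - (-1:ℝ) ^ 2) ^ (n + 1) = 0 := by
    norm_num
  rw [h0] at H
  have H2 : ∫ t in (-1:ℝ)..1,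
      ((2 * (n:ℝ) + 3) * (1 - t ^ 2) ^ (n + 1) - (2 * (n:ℝ) + 2) * (1 - t ^ 2) ^ n) = 0 := by
    rw [← H]
    apply integral_congr
    intro t _
    show (2 * (n:ℝ) + 3) * (1 - t ^ 2) ^ (n + 1) - (2 * (n:ℝ) + 2) * (1 - t ^ 2) ^ n
        = 1 * (1 - t ^ 2) ^ (n + 1) + t * (((n:ℝ) + 1) * (1 - t ^ 2) ^ n * -(2 * t ^ 1))
    rw [pow_succ]
    ring
  rw [intervalIntegral.integral_sub (by apply Continuous.intervalIntegrable; fun_prop)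
      (by apply Continuous.intervalIntegrable; fun_prop),
    intervalIntegral.integral_const_mul, intervalIntegral.integral_const_mul] at H2
  have e1 : W (n + 1) = ∫ t in (-1:ℝ)..1, (1 - t ^ 2) ^ (n + 1) := rfl
  have e2 : W n = ∫ t in (-1:ℝ)..1, (1 - t ^ 2) ^ n := rfl
  rw [← e1, ← e2] at H2
  linarith

lemma W_eq (n : ℕ) : W n = 2 ^ (2 * n + 1) * (n.factorial : ℝ) ^ 2 / ((2 * n + 1).factorial) := by
  induction n with
  | zero =>
    have : W 0 = 2 := by simp [W]; norm_num
    rw [this]; norm_num [Nat.factorial]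
  | succ n ih =>
    have h3 : (2 * (n:ℝ) + 3) ≠ 0 := by positivity
    have hrec := W_succ n
    have hW : W (n + 1) = (2 * (n:ℝ) + 2) * W n / (2 * (n:ℝ) + 3) := by
      field_simp
      linarith
    rw [hW, ih]
    have e1 : ((n + 1).factorial : ℝ) = ((n:ℝ) + 1) * (n.factorial) := by
      rw [Nat.factorial_succ]; push_cast; ring
    have e2 : ((2 * (n + 1) + 1).factorial : ℝ)
        = (2 * (n:ℝ) + 3) * ((2 * (n:ℝ) + 2) * ((2 * n + 1).factorial)) := by
      rw [show 2 * (n + 1) + 1 = (2 * n + 1) + 1 + 1 by ring, Nat.factorial_succ, Nat.factorial_succ]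
      push_cast; ring
    rw [e1, e2]
    have hf : ((2 * n + 1).factorial : ℝ) ≠ 0 := by
      exact_mod_cast Nat.factorial_ne_zero _
    field_simp
    ring

lemma integral_f (n : ℕ) : ∫ t in (-1:ℝ)..1, eval t (f n) = (-1:ℝ) ^ n * W n := by
  rw [W, ← intervalIntegral.integral_const_mul]
  apply integral_congr
  intro t _
  simp only [f, eval_pow, eval_sub, eval_one, eval_X]
  rw [← mul_pow]
  congr 1; ring

lemma core_diag (n : ℕ) :
    ∫ t in (-1:ℝ)..1, eval t (derivative^[n] (f n)) * eval t (derivative^[n] (f n))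
      = ((2 * n).factorial : ℝ) * W n := by
  have h := core_eq n n
  rw [show n + n = 2 * n by ring, top_deriv] at h
  simp only [eval_C] at h
  rw [h]
  have : ∫ t in (-1:ℝ)..1, eval t (f n) * ((2 * n).factorial : ℝ)
      = ((2 * n).factorial : ℝ) * ∫ t in (-1:ℝ)..1, eval t (f n) := by
    rw [← intervalIntegral.integral_const_mul]
    apply integral_congr; intro t _; ring
  rw [this, integral_f]
  rw [show ((-1:ℝ)^n * (((2*n).factorial : ℝ) * ((-1:ℝ)^n * W n)))
      = ((-1:ℝ)^n * (-1:ℝ)^n) * (((2*n).factorial : ℝ) * W n) by ring,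
    ← pow_add, ← two_mul, pow_mul]
  norm_num

/-- Legendre orthogonality on `[-1, 1]`. -/
lemma legendre_orth (n m : ℕ) :
    ∫ t in (-1:ℝ)..1, eval t (legendreP n) * eval t (legendreP m)
      = if n = m then 2 / (2 * (n:ℝ) + 1) else 0 := by
  have hc : ∀ a b : ℕ, ∫ t in (-1:ℝ)..1, eval t (legendreP a) * eval t (legendreP b)
      = (1 / (2 ^ a * a.factorial) : ℝ) * (1 / (2 ^ b * b.factorial) : ℝ)
        * ∫ t in (-1:ℝ)..1, eval t (derivative^[a] (f a)) * eval t (derivative^[b] (f b)) := by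
    intro a b
    rw [← intervalIntegral.integral_const_mul]
    apply integral_congr
    intro t _
    simp only [legendreP, eval_smul, smul_eq_mul, f]
    ring
  rcases lt_trichotomy n m with h | h | h
  · rw [if_neg (by omega), hc]
    have : ∫ t in (-1:ℝ)..1, eval t (derivative^[n] (f n)) * eval t (derivative^[m] (f m))
        = ∫ t in (-1:ℝ)..1, eval t (derivative^[m] (f m)) * eval t (derivative^[n] (f n)) := by
      apply integral_congr; intro t _; ring
    rw [this, core_zero h, mul_zero]
  · subst h
    rw [if_pos rfl, hc, core_diag, W_eq]
    have h1 : ((2 * n + 1).factorial : ℝ) = (2 * (n:ℝ) + 1) * ((2 * n).factorial) := by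
      rw [Nat.factorial_succ]; push_cast; ring
    rw [h1]
    have h2 : ((2 * n).factorial : ℝ) ≠ 0 := by exact_mod_cast Nat.factorial_ne_zero _
    have h3 : ((n).factorial : ℝ) ≠ 0 := by exact_mod_cast Nat.factorial_ne_zero _
    have h4 : (2 : ℝ) ^ n ≠ 0 := by positivity
    have h5 : (2 * (n:ℝ) + 1) ≠ 0 := by positivity
    have h6 : (2:ℝ) ^ (2 * n + 1) = 2 * ((2:ℝ) ^ n) ^ 2 := by
      rw [← pow_mul, mul_comm n 2, pow_succ']
    rw [h6]
    field_simp
  · rw [if_neg (by omega), hc, core_zero h, mul_zero]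

/-- Parity: `P_n(-y) = (-1)^n P_n(y)`. -/
lemma comp_neg_iter (p : Polynomial ℝ) (k : ℕ) :
    derivative^[k] (p.comp (-X)) = (-1) ^ k * (derivative^[k] p).comp (-X) := by
  induction k with
  | zero => simp
  | succ k ih =>
    rw [Function.iterate_succ_apply', ih, derivative_mul, derivative_comp,
      Function.iterate_succ_apply']
    simp only [derivative_pow, derivative_neg, derivative_one, derivative_X]
    ring

lemma f_comp_neg (n : ℕ) : (f n).comp (-X) = f n := by
  simp [f, pow_comp, sub_comp, one_comp, X_comp, neg_pow]

lemma legendre_eval_neg (n : ℕ) (y : ℝ) :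
    eval (-y) (legendreP n) = (-1:ℝ) ^ n * eval y (legendreP n) := by
  have h := comp_neg_iter (f n) n
  rw [f_comp_neg] at h
  have h2 : ∀ z : ℝ, eval z (derivative^[n] (f n))
      = (-1:ℝ) ^ n * eval (-z) (derivative^[n] (f n)) := by
    intro z
    conv_lhs => rw [h]
    simp [eval_comp]
  have h3 := h2 (-y)
  rw [neg_neg] at h3
  have e : legendreP n = (1 / (2 ^ n * n.factorial) : ℝ) • (derivative^[n] (f n)) := rfl
  rw [e, eval_smul, eval_smul, smul_eq_mul, smul_eq_mul, h3]
  ring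

lemma half_integral (n m : ℕ) (hpar : (n + m) % 2 = 0) :
    ∫ t in (0:ℝ)..1, eval t (legendreP n) * eval t (legendreP m)
      = (1 / 2) * ∫ t in (-1:ℝ)..1, eval t (legendreP n) * eval t (legendreP m) := by
  set h : ℝ → ℝ := fun t => eval t (legendreP n) * eval t (legendreP m) with hh
  have heven : ∀ t, h (-t) = h t := by
    intro t
    have hne : (-1:ℝ) ^ n * (-1:ℝ) ^ m = 1 := by
      rw [← pow_add]
      exact Even.neg_one_pow (Nat.even_iff.mpr hpar)
    show eval (-t) (legendreP n) * eval (-t) (legendreP m)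
        = eval t (legendreP n) * eval t (legendreP m)
    rw [legendre_eval_neg, legendre_eval_neg]
    linear_combination (eval t (legendreP n) * eval t (legendreP m)) * hne
  have hcont : Continuous h := by
    apply Continuous.mul <;> exact Polynomial.continuous _
  have h1 : ∫ t in (-1:ℝ)..0, h t = ∫ t in (0:ℝ)..1, h t := by
    have := integral_comp_neg (a := (-1:ℝ)) (b := 0) h
    simp only [neg_zero, neg_neg] at this
    rw [← this]
    apply integral_congr
    intro t _
    exact (heven t).symm
  have h2 : (∫ t in (-1:ℝ)..0, h t) + ∫ t in (0:ℝ)..1, h t = ∫ t in (-1:ℝ)..1, h t :=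
    integral_add_adjacent_intervals (hcont.intervalIntegrable _ _) (hcont.intervalIntegrable _ _)
  linarith

end LegendreAux

open LegendreAux MeasureTheory in
theorem statement16 (x : ℝ) (hx : 0 < x)
    (p : ℕ → ℝ → ℝ)
    (hp : ∀ (k : ℕ) (t : ℝ), p k t =
      (Real.sqrt (2 * (k : ℝ) + 1) / Real.sqrt x) * (legendreP k).eval (t / x))
    (Ahat : ℕ → ℝ → Matrix (Fin 2) (Fin 2) ℝ)
    (hA : ∀ (k : ℕ) (t : ℝ), Ahat k t = !![p (2 * k) t, 0; 0, p (2 * k + 1) t]) :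
    ∀ k j : ℕ, (∫ t in (0 : ℝ)..x, Ahat k t * (Ahat j t)ᵀ) =
      if k = j then (1 : Matrix (Fin 2) (Fin 2) ℝ) else 0 := by
  have hxne : x ≠ 0 := ne_of_gt hx
  have hsx : Real.sqrt x ≠ 0 := by positivity
  -- the scalar orthogonality
  have scalar : ∀ m j : ℕ, (m + j) % 2 = 0 →
      (∫ t in (0:ℝ)..x, p m t * p j t) = if m = j then (1:ℝ) else 0 := by
    intro m j hpar
    have hc : ∀ t : ℝ, p m t * p j t
        = (Real.sqrt (2 * (m:ℝ) + 1) * Real.sqrt (2 * (j:ℝ) + 1) / x)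
          * ((fun y => eval y (legendreP m) * eval y (legendreP j)) (t / x)) := by
      intro t
      rw [hp, hp]
      have hxx : Real.sqrt x * Real.sqrt x = x := Real.mul_self_sqrt hx.le
      field_simp
      rw [Real.sq_sqrt hx.le]
    calc (∫ t in (0:ℝ)..x, p m t * p j t)
        = (Real.sqrt (2 * (m:ℝ) + 1) * Real.sqrt (2 * (j:ℝ) + 1) / x)
          * ∫ t in (0:ℝ)..x, (fun y => eval y (legendreP m) * eval y (legendreP j)) (t / x) := by
          rw [← intervalIntegral.integral_const_mul]
          exact integral_congr fun t _ => hc t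
      _ = (Real.sqrt (2 * (m:ℝ) + 1) * Real.sqrt (2 * (j:ℝ) + 1) / x)
          * (x • ∫ y in (0:ℝ)..1, eval y (legendreP m) * eval y (legendreP j)) := by
          congr 1
          have := integral_comp_div (a := (0:ℝ)) (b := x) (c := x)
            (fun y => eval y (legendreP m) * eval y (legendreP j)) hxne
          simpa [div_self hxne] using this
      _ = if m = j then (1:ℝ) else 0 := by
          rw [half_integral m j hpar, legendre_orth]
          rcases eq_or_ne m j with h | h
          · subst h
            rw [if_pos rfl, if_pos rfl]
            have h1 : Real.sqrt (2 * (m:ℝ) + 1) * Real.sqrt (2 * (m:ℝ) + 1) = 2 * (m:ℝ) + 1 :=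
              Real.mul_self_sqrt (by positivity)
            have h5 : (2 * (m:ℝ) + 1) ≠ 0 := by positivity
            rw [h1, smul_eq_mul]
            field_simp
          · rw [if_neg h, if_neg h]
            simp
  -- continuity of p
  have hcont : ∀ m : ℕ, Continuous (p m) := by
    intro m
    have : p m = fun t => (Real.sqrt (2 * (m:ℝ) + 1) / Real.sqrt x) * eval (t / x) (legendreP m) :=
      funext (hp m)
    rw [this]
    exact continuous_const.mul (((legendreP m).continuous).comp (continuous_id.div_const x))
  intro k j
  set M0 : Matrix (Fin 2) (Fin 2) ℝ := !![1, 0; 0, 0] with hM0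
  set M1 : Matrix (Fin 2) (Fin 2) ℝ := !![0, 0; 0, 1] with hM1
  have hprod : ∀ t : ℝ, Ahat k t * (Ahat j t)ᵀ
      = (p (2 * k) t * p (2 * j) t) • M0 + (p (2 * k + 1) t * p (2 * j + 1) t) • M1 := by
    intro t
    rw [hA, hA, Matrix.eta_fin_two ((!![p (2 * j) t, 0; 0, p (2 * j + 1) t])ᵀ), hM0, hM1]
    simp [Matrix.mul_fin_two]
  have int0 : IntervalIntegrable (fun t => (p (2 * k) t * p (2 * j) t) • M0) volume 0 x :=
    (((hcont _).mul (hcont _)).smul continuous_const).intervalIntegrable _ _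
  have int1 : IntervalIntegrable (fun t => (p (2 * k + 1) t * p (2 * j + 1) t) • M1) volume 0 x :=
    (((hcont _).mul (hcont _)).smul continuous_const).intervalIntegrable _ _
  have step : (∫ t in (0:ℝ)..x, Ahat k t * (Ahat j t)ᵀ)
      = (∫ t in (0:ℝ)..x, p (2 * k) t * p (2 * j) t) • M0
        + (∫ t in (0:ℝ)..x, p (2 * k + 1) t * p (2 * j + 1) t) • M1 := by
    rw [show (fun t => Ahat k t * (Ahat j t)ᵀ)
        = fun t => (p (2 * k) t * p (2 * j) t) • M0 + (p (2 * k + 1) t * p (2 * j + 1) t) • M1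
      from funext hprod]
    rw [integral_add int0 int1, intervalIntegral.integral_smul_const,
      intervalIntegral.integral_smul_const]
  rw [step, scalar (2 * k) (2 * j) (by omega), scalar (2 * k + 1) (2 * j + 1) (by omega)]
  rcases eq_or_ne k j with h | h
  · subst h
    rw [if_pos rfl, if_pos rfl, if_pos rfl]
    ext i i'
    fin_cases i <;> fin_cases i' <;> simp [hM0, hM1, Matrix.one_apply]
  · rw [if_neg (by omega), if_neg (by omega), if_neg h]
    simp
end

section
/- Let B = !![0,1;-1,0] and σ̃₂ = !![1,0;0,-1] be 2×2 real matrices, and let λ, x, t be real numbers. Then (1/2) • (exp(-(λ*(x-t)) • B) + exp(-(λ*(x+t)) • B) * σ̃₂) = !![cos(λx)·cos(λt), cos(λx)·sin(λt); sin(λx)·cos(λt), sin(λx)·sin(λt)]. -/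
set_option linter.unnecessarySeqFocus false

open Matrix Real

noncomputable def cAlgHom : ℂ →ₐ[ℝ] Matrix (Fin 2) (Fin 2) ℝ where
  toFun z := !![z.re, z.im; -z.im, z.re]
  map_one' := by simp [Matrix.one_fin_two]
  map_mul' z w := by
    ext i j
    fin_cases i <;> fin_cases j <;>
      simp [Matrix.mul_apply, Fin.sum_univ_two] <;> ring
  map_zero' := by ext i j; fin_cases i <;> fin_cases j <;> simp
  map_add' z w := by
    ext i j; fin_cases i <;> fin_cases j <;> simp <;> ring
  commutes' r := by
    ext i j
    fin_cases i <;> fin_cases j <;>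
      simp [Matrix.algebraMap_eq_diagonal, Matrix.diagonal]

lemma cAlgHom_cont : Continuous cAlgHom := by
  apply continuous_matrix
  intro i j
  fin_cases i <;> fin_cases j <;>
    simp [cAlgHom] <;> continuity

lemma exp_B (θ : ℝ) :
    NormedSpace.exp (θ • (!![0, 1; -1, 0] : Matrix (Fin 2) (Fin 2) ℝ)) =
      !![Real.cos θ, Real.sin θ; -Real.sin θ, Real.cos θ] := by
  have h1 : (θ • (!![0, 1; -1, 0] : Matrix (Fin 2) (Fin 2) ℝ)) = cAlgHom (θ * Complex.I) := by
    ext i j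
    fin_cases i <;> fin_cases j <;> simp [cAlgHom]
  letI : NormedRing (Matrix (Fin 2) (Fin 2) ℝ) := Matrix.linftyOpNormedRing
  letI : NormedAlgebra ℝ (Matrix (Fin 2) (Fin 2) ℝ) := Matrix.linftyOpNormedAlgebra
  rw [h1]; erw [← NormedSpace.map_exp (cAlgHom : ℂ →ₐ[ℝ] _) cAlgHom_cont]
  rw [← Complex.exp_eq_exp_ℂ]
  ext i j
  fin_cases i <;> fin_cases j <;>
    simp [cAlgHom, Complex.exp_mul_I, Complex.cos_ofReal_re, Complex.sin_ofReal_re]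

theorem statement18
    (B : Matrix (Fin 2) (Fin 2) ℝ) (hB : B = !![0, 1; -1, 0])
    (σ2 : Matrix (Fin 2) (Fin 2) ℝ) (hσ2 : σ2 = !![1, 0; 0, -1])
    (lam x t : ℝ) :
    ((1 : ℝ) / 2) • (NormedSpace.exp ((-(lam * (x - t))) • B) +
        NormedSpace.exp ((-(lam * (x + t))) • B) * σ2) =
      !![Real.cos (lam * x) * Real.cos (lam * t), Real.cos (lam * x) * Real.sin (lam * t);
         Real.sin (lam * x) * Real.cos (lam * t), Real.sin (lam * x) * Real.sin (lam * t)] := by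
  subst hB hσ2
  rw [exp_B, exp_B]
  ext i j
  fin_cases i <;> fin_cases j <;>
    · simp [Matrix.mul_apply, Fin.sum_univ_two,
        Real.cos_sub, Real.cos_add, Real.sin_sub, Real.sin_add,
        mul_sub, mul_add]
      ring
end
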